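/- Let S and U be nonempty finite types, let P be a transition kernel on S with actions U, let r be a reward function, let 0 ≤ γ < 1 and α > 0. Let π⁰ be any policy with π⁰ s u > 0 for all s, u, and define recursively: Q_k is the unique fixed point of Γ_{π^k}, and π^{k+1}(s,u) = exp(Q_k s u/α)/∑_{u'} exp(Q_k s u'/α). Then the sequence (Q_k) is pointwise nondecreasing and converges pointwise to Q*, the unique fixed point of the soft Bellman optimality operator Γ*; moreover Q* s u ≥ Q^π̂ s u for every policy π̂ (where Q^π̂ is the unique fixed point of Γ_{π̂}) and all s, u. (Paper's Theorem 6.3, SVNR Policy Iteration, where strictly nested negotiation realizes the Boltzmann improvement step.) -/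

import Mathlib

open Filter Topology

/-- The soft Bellman operator of a policy `π`. -/
noncomputable def softBellman {S U : Type*} [Fintype S] [Fintype U]
    (P : S → U → S → ℝ) (r : S → U → ℝ) (γ α : ℝ) (π : S → U → ℝ)
    (Q : S → U → ℝ) : S → U → ℝ :=
  fun s u => r s u +
    γ * ∑ s', P s u s' * ∑ u', π s' u' * (Q s' u' - α * Real.log (π s' u'))

/-- The soft Bellman optimality operator. -/
noncomputable def softBellmanOpt {S U : Type*} [Fintype S] [Fintype U]
    (P : S → U → S → ℝ) (r : S → U → ℝ) (γ α : ℝ)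
    (Q : S → U → ℝ) : S → U → ℝ :=
  fun s u => r s u +
    γ * ∑ s', P s u s' * (α * Real.log (∑ u', Real.exp (Q s' u' / α)))

open Filter Topology Finset

section aux
variable {U : Type*} [Fintype U] [Nonempty U]

lemma sumexp_pos (α : ℝ) (f : U → ℝ) : 0 < ∑ u, Real.exp (f u / α) :=
  Finset.sum_pos (fun u _ => Real.exp_pos _) Finset.univ_nonempty

/-- Gibbs variational inequality. -/
lemma gibbs_le {α : ℝ} (hα : 0 < α) (p : U → ℝ) (hp0 : ∀ u, 0 ≤ p u)
    (hp1 : ∑ u, p u = 1) (f : U → ℝ) :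
    ∑ u, p u * (f u - α * Real.log (p u)) ≤ α * Real.log (∑ u, Real.exp (f u / α)) := by
  set g : U → ℝ := fun u => Real.exp (f u / α) with hg
  have hgpos : ∀ u, 0 < g u := fun u => Real.exp_pos _
  have hZ : 0 < ∑ u, g u := sumexp_pos α f
  have key : ∀ u, p u * (f u - α * Real.log (p u))
      = α * (p u * (f u / α - Real.log (p u))) := by
    intro u; field_simp
  rw [Finset.sum_congr rfl (fun u _ => key u), ← Finset.mul_sum]
  have : ∑ u, p u * (f u / α - Real.log (p u)) ≤ Real.log (∑ u, g u) := by
    set T : Finset U := Finset.univ.filter (fun u => p u ≠ 0) with hT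
    have hTsum : ∑ u ∈ T, p u * (f u / α - Real.log (p u))
        = ∑ u, p u * (f u / α - Real.log (p u)) := by
      apply Finset.sum_subset (Finset.filter_subset _ _)
      intro u _ hu
      have : p u = 0 := by
        by_contra h; exact hu (Finset.mem_filter.2 ⟨Finset.mem_univ u, h⟩)
      simp [this]
    have hTp1 : ∑ u ∈ T, p u = 1 := by
      rw [← hp1]
      apply Finset.sum_subset (Finset.filter_subset _ _)
      intro u _ hu
      by_contra h; exact hu (Finset.mem_filter.2 ⟨Finset.mem_univ u, h⟩)
    have hppos : ∀ u ∈ T, 0 < p u := by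
      intro u hu
      exact lt_of_le_of_ne (hp0 u) (Ne.symm (Finset.mem_filter.1 hu).2)
    have hrw : ∀ u ∈ T, p u * (f u / α - Real.log (p u))
        = p u • Real.log (g u / p u) := by
      intro u hu
      rw [Real.log_div (ne_of_gt (hgpos u)) (ne_of_gt (hppos u hu)), hg, Real.log_exp]
      simp [smul_eq_mul]
    calc ∑ u, p u * (f u / α - Real.log (p u))
        = ∑ u ∈ T, p u • Real.log (g u / p u) := by
          rw [← hTsum]; exact Finset.sum_congr rfl hrw
      _ ≤ Real.log (∑ u ∈ T, p u • (g u / p u)) := by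
          apply (strictConcaveOn_log_Ioi.concaveOn).le_map_sum
            (fun u hu => (hppos u hu).le) hTp1
          intro u hu
          exact Set.mem_Ioi.2 (div_pos (hgpos u) (hppos u hu))
      _ ≤ Real.log (∑ u, g u) := by
          apply Real.log_le_log
          · apply Finset.sum_pos
            · intro u hu
              exact smul_pos (hppos u hu) (div_pos (hgpos u) (hppos u hu))
            · rw [Finset.nonempty_iff_ne_empty]
              intro h
              rw [h] at hTp1; simp at hTp1
          · calc ∑ u ∈ T, p u • (g u / p u) = ∑ u ∈ T, g u := by
                  apply Finset.sum_congr rfl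
                  intro u hu
                  rw [smul_eq_mul, mul_div_cancel₀ _ (ne_of_gt (hppos u hu))]
              _ ≤ ∑ u, g u :=
                  Finset.sum_le_sum_of_subset_of_nonneg (Finset.filter_subset _ _)
                    (fun u _ _ => (hgpos u).le)
  exact mul_le_mul_of_nonneg_left this hα.le

/-- Gibbs equality for the Boltzmann policy. -/
lemma gibbs_eq {α : ℝ} (hα : 0 < α) (f : U → ℝ) :
    ∑ u, (Real.exp (f u / α) / ∑ u', Real.exp (f u' / α)) *
      (f u - α * Real.log (Real.exp (f u / α) / ∑ u', Real.exp (f u' / α)))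
      = α * Real.log (∑ u, Real.exp (f u / α)) := by
  have hZ : 0 < ∑ u', Real.exp (f u' / α) := sumexp_pos α f
  have key : ∀ u, (Real.exp (f u / α) / ∑ u', Real.exp (f u' / α)) *
      (f u - α * Real.log (Real.exp (f u / α) / ∑ u', Real.exp (f u' / α)))
      = (Real.exp (f u / α) / ∑ u', Real.exp (f u' / α)) *
        (α * Real.log (∑ u', Real.exp (f u' / α))) := by
    intro u
    rw [Real.log_div (ne_of_gt (Real.exp_pos _)) (ne_of_gt hZ), Real.log_exp]
    have : f u - α * (f u / α - Real.log (∑ u', Real.exp (f u' / α)))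
        = α * Real.log (∑ u', Real.exp (f u' / α)) := by
      field_simp
      ring
    rw [this]
  rw [Finset.sum_congr rfl (fun u _ => key u), ← Finset.sum_mul, ← Finset.sum_div,
    div_self (ne_of_gt hZ), one_mul]


lemma weighted_diff_le {S : Type*} [Fintype S] {w : S → ℝ} (hw0 : ∀ s, 0 ≤ w s)
    (hw1 : ∑ s, w s = 1) {a b : S → ℝ} {M : ℝ} (h : ∀ s, a s - b s ≤ M) :
    (∑ s, w s * a s) - ∑ s, w s * b s ≤ M := by
  rw [← Finset.sum_sub_distrib]
  calc ∑ s, (w s * a s - w s * b s) = ∑ s, w s * (a s - b s) :=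
        Finset.sum_congr rfl fun s _ => by ring
    _ ≤ ∑ s, w s * M := Finset.sum_le_sum fun s _ => mul_le_mul_of_nonneg_left (h s) (hw0 s)
    _ = M := by rw [← Finset.sum_mul, hw1, one_mul]

lemma logsumexp_lip {α : ℝ} (hα : 0 < α) {Q1 Q2 : U → ℝ} {M : ℝ}
    (h : ∀ u, Q1 u - Q2 u ≤ M) :
    α * Real.log (∑ u, Real.exp (Q1 u / α)) - α * Real.log (∑ u, Real.exp (Q2 u / α)) ≤ M := by
  have hZ1 : 0 < ∑ u, Real.exp (Q1 u / α) := sumexp_pos α Q1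
  have hZ2 : 0 < ∑ u, Real.exp (Q2 u / α) := sumexp_pos α Q2
  have hle : (∑ u, Real.exp (Q1 u / α)) ≤ Real.exp (M / α) * ∑ u, Real.exp (Q2 u / α) := by
    rw [Finset.mul_sum]
    apply Finset.sum_le_sum
    intro u _
    rw [← Real.exp_add, ← add_div]
    exact Real.exp_le_exp.2 ((div_le_div_iff_of_pos_right hα).2 (by linarith [h u]))
  have hlog := Real.log_le_log hZ1 hle
  rw [Real.log_mul (ne_of_gt (Real.exp_pos _)) (ne_of_gt hZ2), Real.log_exp] at hlog
  have h2 := mul_le_mul_of_nonneg_left hlog hα.le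
  have h3 : α * (M / α) = M := by field_simp
  rw [mul_add, h3] at h2
  linarith

end aux

section ops
variable {S U : Type*} [Fintype S] [Fintype U] [Nonempty S] [Nonempty U]

lemma bellman_lip (P : S → U → S → ℝ) (hP0 : ∀ s u s', 0 ≤ P s u s')
    (hP1 : ∀ s u, ∑ s', P s u s' = 1) (r : S → U → ℝ) {γ α : ℝ} (hγ0 : 0 ≤ γ)
    (π : S → U → ℝ) (hπ0 : ∀ s u, 0 ≤ π s u) (hπ1 : ∀ s, ∑ u, π s u = 1)
    {Q1 Q2 : S → U → ℝ} {M : ℝ} (h : ∀ s u, Q1 s u - Q2 s u ≤ M) (s : S) (u : U) :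
    softBellman P r γ α π Q1 s u - softBellman P r γ α π Q2 s u ≤ γ * M := by
  simp only [softBellman]
  have inner : ∀ s', (∑ u', π s' u' * (Q1 s' u' - α * Real.log (π s' u')))
      - (∑ u', π s' u' * (Q2 s' u' - α * Real.log (π s' u'))) ≤ M := by
    intro s'
    apply weighted_diff_le (hπ0 s') (hπ1 s')
    intro u'; have := h s' u'; linarith
  have outer := weighted_diff_le (hP0 s u) (hP1 s u) inner
  have h2 := mul_le_mul_of_nonneg_left outer hγ0
  rw [mul_sub] at h2
  linarith

lemma bellmanOpt_lip (P : S → U → S → ℝ) (hP0 : ∀ s u s', 0 ≤ P s u s')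
    (hP1 : ∀ s u, ∑ s', P s u s' = 1) (r : S → U → ℝ) {γ α : ℝ} (hγ0 : 0 ≤ γ) (hα : 0 < α)
    {Q1 Q2 : S → U → ℝ} {M : ℝ} (h : ∀ s u, Q1 s u - Q2 s u ≤ M) (s : S) (u : U) :
    softBellmanOpt P r γ α Q1 s u - softBellmanOpt P r γ α Q2 s u ≤ γ * M := by
  simp only [softBellmanOpt]
  have inner : ∀ s', (α * Real.log (∑ u', Real.exp (Q1 s' u' / α)))
      - (α * Real.log (∑ u', Real.exp (Q2 s' u' / α))) ≤ M :=
    fun s' => logsumexp_lip hα (fun u' => h s' u')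
  have outer := weighted_diff_le (hP0 s u) (hP1 s u) inner
  have h2 := mul_le_mul_of_nonneg_left outer hγ0
  rw [mul_sub] at h2
  linarith

lemma le_fix {γ : ℝ} (hγ1 : γ < 1)
    (T : (S → U → ℝ) → S → U → ℝ)
    (hlip : ∀ (Q1 Q2 : S → U → ℝ) (M : ℝ), (∀ s u, Q1 s u - Q2 s u ≤ M) →
      ∀ s u, T Q1 s u - T Q2 s u ≤ γ * M)
    (F X : S → U → ℝ) (hF : T F = F) (hX : ∀ s u, X s u ≤ T X s u) :
    ∀ s u, X s u ≤ F s u := by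
  set M := Finset.univ.sup' Finset.univ_nonempty (fun p : S × U => X p.1 p.2 - F p.1 p.2)
    with hM
  have hMub : ∀ s u, X s u - F s u ≤ M := fun s u =>
    Finset.le_sup' (f := fun p : S × U => X p.1 p.2 - F p.1 p.2) (Finset.mem_univ (s, u))
  have hstep : ∀ s u, X s u - F s u ≤ γ * M := by
    intro s u
    have h1 := hlip X F M hMub s u
    rw [hF] at h1
    have h2 := hX s u
    linarith
  have hMle : M ≤ γ * M := by
    rw [hM]
    exact Finset.sup'_le _ _ fun p _ => hstep p.1 p.2
  have hM0 : M ≤ 0 := by nlinarith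
  intro s u; have := hMub s u; linarith

lemma bellman_le_opt (P : S → U → S → ℝ) (hP0 : ∀ s u s', 0 ≤ P s u s')
    (r : S → U → ℝ) {γ α : ℝ} (hγ0 : 0 ≤ γ) (hα : 0 < α)
    (π : S → U → ℝ) (hπ0 : ∀ s u, 0 ≤ π s u) (hπ1 : ∀ s, ∑ u, π s u = 1)
    (Q : S → U → ℝ) (s : S) (u : U) :
    softBellman P r γ α π Q s u ≤ softBellmanOpt P r γ α Q s u := by
  simp only [softBellman, softBellmanOpt]
  apply add_le_add le_rfl
  apply mul_le_mul_of_nonneg_left _ hγ0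
  apply Finset.sum_le_sum
  intro s' _
  exact mul_le_mul_of_nonneg_left (gibbs_le hα (π s') (hπ0 s') (hπ1 s') (Q s')) (hP0 s u s')

end ops

theorem svnr_policy_iteration
    {S U : Type*} [Fintype S] [Fintype U] [Nonempty S] [Nonempty U]
    (P : S → U → S → ℝ) (hP0 : ∀ s u s', 0 ≤ P s u s')
    (hP1 : ∀ s u, ∑ s', P s u s' = 1)
    (r : S → U → ℝ) (γ α : ℝ) (hγ0 : 0 ≤ γ) (hγ1 : γ < 1) (hα : 0 < α)
    -- the sequence of policies, starting from an arbitrary everywhere-positive policy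
    (π : ℕ → S → U → ℝ)
    (hπ0pos : ∀ s u, 0 < π 0 s u) (hπ0sum : ∀ s, ∑ u, π 0 s u = 1)
    -- `Q k` is the (unique) fixed point of the soft Bellman operator of `π k`
    (Q : ℕ → S → U → ℝ)
    (hQfix : ∀ k, softBellman P r γ α (π k) (Q k) = Q k)
    -- Boltzmann policy improvement (the agreement of strictly nested Stein negotiation)
    (hπsucc : ∀ k s u,
      π (k + 1) s u = Real.exp (Q k s u / α) / ∑ u', Real.exp (Q k s u' / α))
    -- `Qstar` is the (unique) fixed point of the soft Bellman optimality operator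
    (Qstar : S → U → ℝ) (hQstar : softBellmanOpt P r γ α Qstar = Qstar) :
    (∀ k s u, Q k s u ≤ Q (k + 1) s u) ∧
    (∀ s u, Tendsto (fun k => Q k s u) atTop (𝓝 (Qstar s u))) ∧
    (∀ πhat : S → U → ℝ, (∀ s u, 0 ≤ πhat s u) → (∀ s, ∑ u, πhat s u = 1) →
      ∀ Qhat : S → U → ℝ, softBellman P r γ α πhat Qhat = Qhat →
        ∀ s u, Qhat s u ≤ Qstar s u) := by
  -- policy properties
  have hπprop : ∀ k, (∀ s u, 0 ≤ π k s u) ∧ (∀ s, ∑ u, π k s u = 1) := by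
    intro k
    induction k with
    | zero => exact ⟨fun s u => (hπ0pos s u).le, hπ0sum⟩
    | succ k _ =>
      constructor
      · intro s u
        rw [hπsucc]
        positivity
      · intro s
        have hZ : 0 < ∑ u', Real.exp (Q k s u' / α) := sumexp_pos α (Q k s)
        calc ∑ u, π (k + 1) s u
            = ∑ u, Real.exp (Q k s u / α) / ∑ u', Real.exp (Q k s u' / α) :=
              Finset.sum_congr rfl fun u _ => hπsucc k s u
          _ = 1 := by rw [← Finset.sum_div, div_self (ne_of_gt hZ)]
  -- the Boltzmann step realizes the optimality operator
  have hπeq : ∀ k, softBellman P r γ α (π (k + 1)) (Q k) = softBellmanOpt P r γ α (Q k) := by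
    intro k
    funext s u
    simp only [softBellman, softBellmanOpt]
    congr 1
    congr 1
    apply Finset.sum_congr rfl
    intro s' _
    congr 1
    calc ∑ u', π (k + 1) s' u' * (Q k s' u' - α * Real.log (π (k + 1) s' u'))
        = ∑ u', (Real.exp (Q k s' u' / α) / ∑ u'', Real.exp (Q k s' u'' / α)) *
            (Q k s' u' - α * Real.log
              (Real.exp (Q k s' u' / α) / ∑ u'', Real.exp (Q k s' u'' / α))) := by
          apply Finset.sum_congr rfl
          intro u' _
          rw [hπsucc]
      _ = α * Real.log (∑ u', Real.exp (Q k s' u' / α)) := gibbs_eq hα (Q k s')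
  -- Part 1: monotone improvement
  have part1 : ∀ k s u, Q k s u ≤ Q (k + 1) s u := by
    intro k
    apply le_fix hγ1 (softBellman P r γ α (π (k + 1)))
      (fun Q1 Q2 M h => bellman_lip P hP0 hP1 r hγ0 (π (k + 1))
        (hπprop (k + 1)).1 (hπprop (k + 1)).2 h)
      (Q (k + 1)) (Q k) (hQfix (k + 1))
    intro s u
    calc Q k s u = softBellman P r γ α (π k) (Q k) s u := by rw [hQfix k]
      _ ≤ softBellmanOpt P r γ α (Q k) s u :=
          bellman_le_opt P hP0 r hγ0 hα (π k) (hπprop k).1 (hπprop k).2 (Q k) s u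
      _ = softBellman P r γ α (π (k + 1)) (Q k) s u := by rw [hπeq k]
  -- Part 3: optimality among all policies
  have part3 : ∀ πhat : S → U → ℝ, (∀ s u, 0 ≤ πhat s u) → (∀ s, ∑ u, πhat s u = 1) →
      ∀ Qhat : S → U → ℝ, softBellman P r γ α πhat Qhat = Qhat →
        ∀ s u, Qhat s u ≤ Qstar s u := by
    intro πhat hπhat0 hπhat1 Qhat hQhat
    apply le_fix hγ1 (softBellmanOpt P r γ α)
      (fun Q1 Q2 M h => bellmanOpt_lip P hP0 hP1 r hγ0 hα h)
      Qstar Qhat hQstar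
    intro s u
    calc Qhat s u = softBellman P r γ α πhat Qhat s u := by rw [hQhat]
      _ ≤ softBellmanOpt P r γ α Qhat s u :=
          bellman_le_opt P hP0 r hγ0 hα πhat hπhat0 hπhat1 Qhat s u
  have hQleStar : ∀ k s u, Q k s u ≤ Qstar s u := fun k =>
    part3 (π k) (hπprop k).1 (hπprop k).2 (Q k) (hQfix k)
  -- Part 2: convergence
  have part2 : ∀ s u, Tendsto (fun k => Q k s u) atTop (𝓝 (Qstar s u)) := by
    set e : ℕ → ℝ := fun k =>
      Finset.univ.sup' Finset.univ_nonempty (fun p : S × U => Qstar p.1 p.2 - Q k p.1 p.2)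
      with he
    have heub : ∀ k s u, Qstar s u - Q k s u ≤ e k := fun k s u =>
      Finset.le_sup' (f := fun p : S × U => Qstar p.1 p.2 - Q k p.1 p.2)
        (Finset.mem_univ (s, u))
    have he0 : ∀ k, 0 ≤ e k := by
      intro k
      obtain ⟨s0⟩ := (inferInstance : Nonempty S)
      obtain ⟨u0⟩ := (inferInstance : Nonempty U)
      have h1 := hQleStar k s0 u0
      have h2 := heub k s0 u0
      linarith
    have herec : ∀ k, e (k + 1) ≤ γ * e k := by
      intro k
      rw [he]
      apply Finset.sup'_le
      rintro ⟨s, u⟩ _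
      have hmono : softBellman P r γ α (π (k + 1)) (Q k) s u
          ≤ softBellman P r γ α (π (k + 1)) (Q (k + 1)) s u := by
        have h := bellman_lip (α := α) P hP0 hP1 r hγ0 (π (k + 1))
          (hπprop (k + 1)).1 (hπprop (k + 1)).2 (Q1 := Q k) (Q2 := Q (k + 1)) (M := 0)
          (fun s' u' => sub_nonpos.2 (part1 k s' u')) s u
        rw [mul_zero] at h
        linarith
      have hlsq : softBellmanOpt P r γ α Qstar s u - softBellmanOpt P r γ α (Q k) s u
          ≤ γ * e k :=
        bellmanOpt_lip P hP0 hP1 r hγ0 hα (fun s' u' => heub k s' u') s u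
      have h1 : Q (k + 1) s u = softBellman P r γ α (π (k + 1)) (Q (k + 1)) s u := by
        rw [hQfix (k + 1)]
      have h2 : softBellman P r γ α (π (k + 1)) (Q k) s u
          = softBellmanOpt P r γ α (Q k) s u := by rw [hπeq k]
      have h3 : Qstar s u = softBellmanOpt P r γ α Qstar s u := by rw [hQstar]
      simp only []
      linarith
    have hegeo : ∀ k, e k ≤ γ ^ k * e 0 := by
      intro k
      induction k with
      | zero => simp
      | succ k ih =>
        calc e (k + 1) ≤ γ * e k := herec k
          _ ≤ γ * (γ ^ k * e 0) := mul_le_mul_of_nonneg_left ih hγ0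
          _ = γ ^ (k + 1) * e 0 := by ring
    have htend0 : Tendsto e atTop (𝓝 0) := by
      apply squeeze_zero he0 hegeo
      have := (tendsto_pow_atTop_nhds_zero_of_lt_one hγ0 hγ1).mul_const (e 0)
      simpa using this
    intro s u
    have hd : Tendsto (fun k => Qstar s u - Q k s u) atTop (𝓝 0) :=
      squeeze_zero (fun k => by have := hQleStar k s u; linarith)
        (fun k => heub k s u) htend0
    have h := (tendsto_const_nhds (x := Qstar s u) (f := atTop)).sub hd
    simpa using h
  exact ⟨part1, part2, part3⟩
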